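/- The bound √3/2 in the planar Borsuk partition is sharp: the closed unit-diameter disk in ℝ² cannot be partitioned into three sets each of diameter strictly less than √3/2. -/

import Mathlib

open Real Set

/-- Point on the circle of radius `1/2` at angle `t`. -/
noncomputable def bpt (t : ℝ) : EuclideanSpace ℝ (Fin 2) := WithLp.toLp 2 ![Real.cos t / 2, Real.sin t / 2]

lemma bpt_norm (t : ℝ) : dist (bpt t) 0 = 1/2 := by
  rw [EuclideanSpace.dist_eq]
  have h : ∑ i, dist (bpt t i) ((0 : EuclideanSpace ℝ (Fin 2)) i) ^ 2 = (1/2)^2 := by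
    simp [bpt, Fin.sum_univ_two, Real.dist_eq, sq_abs]
    nlinarith [Real.sin_sq_add_cos_sq t]
  rw [h, Real.sqrt_sq (by norm_num)]

lemma bpt_dist (s t : ℝ) (h1 : s ≤ t) (h2 : t - s ≤ 2*π) :
    dist (bpt s) (bpt t) = Real.sin ((t - s)/2) := by
  have hπ := Real.pi_pos
  rw [EuclideanSpace.dist_eq]
  have hs : Real.sin ((t-s)/2) ^ 2 = 1/2 - Real.cos (t-s)/2 := by
    rw [Real.sin_sq_eq_half_sub]; ring_nf
  have hc : Real.cos (t - s) = Real.cos t * Real.cos s + Real.sin t * Real.sin s :=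
    Real.cos_sub t s
  have h : ∑ i, dist (bpt s i) (bpt t i) ^ 2 = Real.sin ((t-s)/2) ^ 2 := by
    simp [bpt, Fin.sum_univ_two, Real.dist_eq, sq_abs]
    nlinarith [Real.sin_sq_add_cos_sq t, Real.sin_sq_add_cos_sq s]
  rw [h, Real.sqrt_sq]
  apply Real.sin_nonneg_of_nonneg_of_le_pi <;> linarith

lemma sin_le_cases (x y : ℝ) (hxπ : x ≤ π) (hy0 : 0 ≤ y) (hyπ : y ≤ π/2)
    (h : Real.sin x ≤ Real.sin y) : x ≤ y ∨ π - y ≤ x := by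
  have hπ := Real.pi_pos
  by_contra hc
  push_neg at hc
  obtain ⟨h1, h2⟩ := hc
  rcases le_or_gt x (π/2) with hx | hx
  · have := Real.strictMonoOn_sin (Set.mem_Icc.mpr ⟨by linarith, by linarith⟩)
      (Set.mem_Icc.mpr ⟨by linarith, hx⟩) h1
    linarith
  · have hs : Real.sin (π - x) = Real.sin x := Real.sin_pi_sub x
    have := Real.strictMonoOn_sin (Set.mem_Icc.mpr ⟨by linarith, by linarith⟩)
      (Set.mem_Icc.mpr ⟨by linarith, by linarith⟩) (show y < π - x by linarith)
    linarith

/-- Covering the circle (as angles in `[0, 2π]`) by three classes, each of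
"angular diameter" at most `γ < 2π/3` (modulo `2π`), is impossible when the
classes are anchored at the three angles `0`, `2π/3`, `4π/3`. -/
lemma arc_cover (γ : ℝ) (hγ : γ < 2 * π / 3)
    (S0 S1 S2 : Set ℝ)
    (cover : ∀ t, 0 ≤ t → t ≤ 2 * π → t ∈ S0 ∨ t ∈ S1 ∨ t ∈ S2)
    (con0 : ∀ t s, t ∈ S0 → s ∈ S0 → 0 ≤ t → t ≤ 2*π → 0 ≤ s → s ≤ 2*π →
      |t - s| ≤ γ ∨ 2*π - γ ≤ |t - s|)
    (con1 : ∀ t s, t ∈ S1 → s ∈ S1 → 0 ≤ t → t ≤ 2*π → 0 ≤ s → s ≤ 2*π →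
      |t - s| ≤ γ ∨ 2*π - γ ≤ |t - s|)
    (con2 : ∀ t s, t ∈ S2 → s ∈ S2 → 0 ≤ t → t ≤ 2*π → 0 ≤ s → s ≤ 2*π →
      |t - s| ≤ γ ∨ 2*π - γ ≤ |t - s|)
    (m0 : 0 ∈ S0) (m1 : 2*π/3 ∈ S1) (m2 : 4*π/3 ∈ S2) : False := by
  have hπ := Real.pi_pos
  set ε := (2*π/3 - γ)/3 with hε
  have hε0 : 0 < ε := by rw [hε]; linarith
  -- no point of S2 in [0, 2π/3]
  have h02 : ∀ t, t ∈ S2 → 0 ≤ t → t ≤ 2*π/3 → False := by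
    intro t ht h0 h1
    rcases con2 t (4*π/3) ht m2 h0 (by linarith) (by linarith) (by linarith) with h | h <;>
      rw [abs_of_nonpos (by linarith)] at h <;> linarith
  -- no point of S0 in [2π/3, 4π/3]
  have h10 : ∀ t, t ∈ S0 → 2*π/3 ≤ t → t ≤ 4*π/3 → False := by
    intro t ht h0 h1
    rcases con0 t 0 ht m0 (by linarith) (by linarith) le_rfl (by linarith) with h | h <;>
      rw [abs_of_nonneg (by linarith), sub_zero] at h <;> linarith
  -- sup of S0 on [0, 2π/3]
  have hne0 : (S0 ∩ Set.Icc 0 (2*π/3)).Nonempty :=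
    ⟨0, m0, Set.mem_Icc.mpr ⟨le_rfl, by linarith⟩⟩
  have hbd0 : BddAbove (S0 ∩ Set.Icc 0 (2*π/3)) := bddAbove_Icc.mono Set.inter_subset_right
  set a := sSup (S0 ∩ Set.Icc 0 (2*π/3)) with ha
  have ha0 : 0 ≤ a := le_csSup hbd0 ⟨m0, Set.mem_Icc.mpr ⟨le_rfl, by linarith⟩⟩
  have haγ : a ≤ γ := by
    apply csSup_le hne0
    rintro t ⟨ht, h0, h1⟩
    rcases con0 t 0 ht m0 h0 (by linarith) le_rfl (by linarith) with h | h <;>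
      rw [abs_of_nonneg (by linarith), sub_zero] at h <;> linarith
  have hγ0 : 0 ≤ γ := le_trans ha0 haγ
  -- the point a + ε is in S1
  have hu1 : a + ε ∈ S1 := by
    have hub : a + ε ≤ 2*π/3 := by rw [hε] at *; linarith
    rcases cover (a+ε) (by linarith) (by linarith) with h | h | h
    · exact absurd (le_csSup hbd0 ⟨h, Set.mem_Icc.mpr ⟨by linarith, hub⟩⟩) (by linarith)
    · exact h
    · exact (h02 (a+ε) h (by linarith) hub).elim
  -- sup of S1 on [0, 4π/3]
  have hne1 : (S1 ∩ Set.Icc 0 (4*π/3)).Nonempty :=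
    ⟨2*π/3, m1, Set.mem_Icc.mpr ⟨by linarith, by linarith⟩⟩
  have hbd1 : BddAbove (S1 ∩ Set.Icc 0 (4*π/3)) := bddAbove_Icc.mono Set.inter_subset_right
  set b := sSup (S1 ∩ Set.Icc 0 (4*π/3)) with hb
  have hb_ge : 2*π/3 ≤ b := le_csSup hbd1 ⟨m1, Set.mem_Icc.mpr ⟨by linarith, by linarith⟩⟩
  have hb_le : b ≤ a + ε + γ := by
    apply csSup_le hne1
    rintro t ⟨ht, h0, h1⟩
    rcases con1 t (a+ε) ht hu1 h0 (by linarith) (by linarith) (by rw [hε] at *; linarith)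
      with h | h
    · have := (abs_le.mp h).2; linarith
    · have hub : |t - (a+ε)| ≤ 4*π/3 := abs_le.mpr ⟨by rw [hε] at *; linarith, by linarith⟩
      linarith
  -- the point b + ε is in S2
  have hv2 : b + ε ∈ S2 := by
    have hvb : b + ε ≤ 4*π/3 := by rw [hε] at *; linarith
    rcases cover (b+ε) (by linarith) (by linarith) with h | h | h
    · exact (h10 (b+ε) h (by linarith) hvb).elim
    · exact absurd (le_csSup hbd1 ⟨h, Set.mem_Icc.mpr ⟨by linarith, hvb⟩⟩) (by linarith)
    · exact h
  -- a near-maximal point of S0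
  obtain ⟨s₀, hs₀mem, hs₀gt⟩ := exists_lt_of_lt_csSup hne0 (show a - ε < a by linarith)
  obtain ⟨hs₀0, hs₀l, hs₀r⟩ : s₀ ∈ S0 ∧ 0 ≤ s₀ ∧ s₀ ≤ 2*π/3 := ⟨hs₀mem.1, hs₀mem.2.1, hs₀mem.2.2⟩
  have hs₀a : s₀ ≤ a := le_csSup hbd0 hs₀mem
  -- the witness point w = s₀ + 4π/3 is in no class
  set w := s₀ + 4*π/3 with hw
  have hw2π : w ≤ 2*π := by rw [hw]; linarith
  have hw0 : 0 ≤ w := by rw [hw]; linarith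
  rcases cover w hw0 hw2π with h | h | h
  · rcases con0 w s₀ h hs₀0 hw0 hw2π hs₀l (by linarith) with hh | hh <;>
      rw [show w - s₀ = 4*π/3 by rw [hw]; ring, abs_of_nonneg (by linarith)] at hh <;> linarith
  · rcases con1 w (a+ε) h hu1 hw0 hw2π (by linarith) (by rw [hε] at *; linarith) with hh | hh <;>
      rw [abs_of_nonneg (by rw [hw, hε] at *; linarith)] at hh <;> rw [hw, hε] at * <;> linarith
  · rcases con2 w (b+ε) h hv2 hw0 hw2π (by linarith) (by rw [hε] at *; linarith) with hh | hh <;>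
      rw [abs_of_nonneg (by rw [hw, hε] at *; linarith)] at hh <;> rw [hw, hε] at * <;> linarith

/-- Sharpness of `√3/2` in the planar Borsuk problem: the closed disk of
diameter `1` cannot be partitioned into three sets each of diameter `< √3/2`. -/
theorem borsuk_plane_sharpness :
    ¬ ∃ A B C : Set (EuclideanSpace ℝ (Fin 2)),
      Metric.closedBall (0 : EuclideanSpace ℝ (Fin 2)) (1/2) = A ∪ B ∪ C ∧
      Disjoint A B ∧ Disjoint A C ∧ Disjoint B C ∧
      Metric.diam A < Real.sqrt 3 / 2 ∧
      Metric.diam B < Real.sqrt 3 / 2 ∧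
      Metric.diam C < Real.sqrt 3 / 2 := by
  rintro ⟨A, B, C, hcov, -, -, -, hdA, hdB, hdC⟩
  have hπ := Real.pi_pos
  have h3 : Real.sqrt 3 < 2 := by
    nlinarith [Real.sq_sqrt (by norm_num : (0:ℝ) ≤ 3), Real.sqrt_nonneg 3]
  have h30 : (0:ℝ) ≤ Real.sqrt 3 := Real.sqrt_nonneg 3
  set dmax := max (Metric.diam A) (max (Metric.diam B) (Metric.diam C)) with hdm
  have hd0 : 0 ≤ dmax := le_trans Metric.diam_nonneg (le_max_left _ _)
  have hdlt : dmax < Real.sqrt 3 / 2 := by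
    rw [hdm]; exact max_lt hdA (max_lt hdB hdC)
  have hd1 : dmax ≤ 1 := by linarith
  set γ := 2 * Real.arcsin dmax with hγdef
  have hγhalf : γ / 2 = Real.arcsin dmax := by rw [hγdef]; ring
  have hsinγ : Real.sin (γ/2) = dmax := by rw [hγhalf]; exact Real.sin_arcsin (by linarith) hd1
  have hγ2 : γ / 2 ≤ π / 2 := by rw [hγhalf]; exact Real.arcsin_le_pi_div_two dmax
  have hγ0 : 0 ≤ γ := by
    rw [hγdef]; have := Real.arcsin_nonneg.mpr hd0; linarith
  have hγlt : γ < 2 * π / 3 := by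
    have harc : Real.arcsin dmax < Real.arcsin (Real.sqrt 3 / 2) :=
      Real.strictMonoOn_arcsin (Set.mem_Icc.mpr ⟨by linarith, hd1⟩)
        (Set.mem_Icc.mpr ⟨by linarith, by linarith⟩) hdlt
    rw [show Real.sqrt 3 / 2 = Real.sin (π/3) by rw [Real.sin_pi_div_three],
      Real.arcsin_sin (by linarith) (by linarith)] at harc
    rw [hγdef]; linarith
  have hball : ∀ t : ℝ, bpt t ∈ Metric.closedBall (0 : EuclideanSpace ℝ (Fin 2)) (1/2) := by
    intro t
    rw [Metric.mem_closedBall, bpt_norm]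
  -- same-class points on the circle are angularly close (mod 2π)
  have key : ∀ S : Set (EuclideanSpace ℝ (Fin 2)),
      S ⊆ Metric.closedBall (0 : EuclideanSpace ℝ (Fin 2)) (1/2) → Metric.diam S ≤ dmax →
      ∀ t s : ℝ, t ∈ {u : ℝ | bpt u ∈ S} → s ∈ {u : ℝ | bpt u ∈ S} →
        0 ≤ t → t ≤ 2*π → 0 ≤ s → s ≤ 2*π → |t - s| ≤ γ ∨ 2*π - γ ≤ |t - s| := by
    intro S hsub hdiam t s ht hs ht0 ht2 hs0 hs2
    have hbdd : Bornology.IsBounded S := Metric.isBounded_closedBall.subset hsub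
    have main : ∀ u v : ℝ, bpt u ∈ S → bpt v ∈ S → 0 ≤ u → v ≤ 2*π → u ≤ v →
        v - u ≤ γ ∨ 2*π - γ ≤ v - u := by
      intro u v hu hv hu0 hv2 huv
      have hdist : dist (bpt u) (bpt v) = Real.sin ((v - u)/2) :=
        bpt_dist u v huv (by linarith)
      have hle : Real.sin ((v - u)/2) ≤ Real.sin (γ/2) := by
        rw [← hdist, hsinγ]
        exact le_trans (Metric.dist_le_diam_of_mem hbdd hu hv) hdiam
      rcases sin_le_cases ((v-u)/2) (γ/2) (by linarith) (by linarith) hγ2 hle with h | h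
      · left; linarith
      · right; linarith
    rcases le_total s t with h | h
    · rw [abs_of_nonneg (by linarith)]
      exact main s t hs ht hs0 ht2 h
    · rw [abs_of_nonpos (by linarith)]
      have := main t s ht hs ht0 hs2 h
      rcases this with hh | hh
      · left; linarith
      · right; linarith
  -- main contradiction given an assignment of the triangle vertices to classes
  have main : ∀ S0 S1 S2 : Set (EuclideanSpace ℝ (Fin 2)),
      S0 ⊆ Metric.closedBall 0 (1/2) → S1 ⊆ Metric.closedBall 0 (1/2) →
      S2 ⊆ Metric.closedBall 0 (1/2) →
      Metric.diam S0 ≤ dmax → Metric.diam S1 ≤ dmax → Metric.diam S2 ≤ dmax →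
      (∀ x ∈ Metric.closedBall (0 : EuclideanSpace ℝ (Fin 2)) (1/2),
        x ∈ S0 ∨ x ∈ S1 ∨ x ∈ S2) →
      bpt 0 ∈ S0 → bpt (2*π/3) ∈ S1 → bpt (4*π/3) ∈ S2 → False := by
    intro S0 S1 S2 hsub0 hsub1 hsub2 hdm0 hdm1 hdm2 hU h0 h1 h2
    exact arc_cover γ hγlt {u : ℝ | bpt u ∈ S0} {u : ℝ | bpt u ∈ S1} {u : ℝ | bpt u ∈ S2}
      (fun t _ _ => hU (bpt t) (hball t))
      (key S0 hsub0 hdm0) (key S1 hsub1 hdm1) (key S2 hsub2 hdm2) h0 h1 h2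
  -- the inscribed equilateral triangle has side √3/2
  have d01 : dist (bpt 0) (bpt (2*π/3)) = Real.sqrt 3 / 2 := by
    rw [bpt_dist 0 (2*π/3) (by linarith) (by linarith),
      show (2*π/3 - 0)/2 = π/3 by ring, Real.sin_pi_div_three]
  have d02 : dist (bpt 0) (bpt (4*π/3)) = Real.sqrt 3 / 2 := by
    rw [bpt_dist 0 (4*π/3) (by linarith) (by linarith),
      show (4*π/3 - 0)/2 = π - π/3 by ring, Real.sin_pi_sub, Real.sin_pi_div_three]
  have d12 : dist (bpt (2*π/3)) (bpt (4*π/3)) = Real.sqrt 3 / 2 := by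
    rw [bpt_dist (2*π/3) (4*π/3) (by linarith) (by linarith),
      show (4*π/3 - 2*π/3)/2 = π/3 by ring, Real.sin_pi_div_three]
  -- two triangle vertices cannot be in the same class
  have notsame : ∀ S : Set (EuclideanSpace ℝ (Fin 2)),
      S ⊆ Metric.closedBall 0 (1/2) → Metric.diam S ≤ dmax →
      ∀ p q : EuclideanSpace ℝ (Fin 2), dist p q = Real.sqrt 3 / 2 →
        p ∈ S → q ∈ S → False := by
    intro S hsub hdiam p q hpq hp hq
    have hbdd : Bornology.IsBounded S := Metric.isBounded_closedBall.subset hsub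
    have := Metric.dist_le_diam_of_mem hbdd hp hq
    rw [hpq] at this
    linarith
  -- subsets and diameter bounds
  have hsubA : A ⊆ Metric.closedBall (0 : EuclideanSpace ℝ (Fin 2)) (1/2) := by
    rw [hcov]; exact Set.subset_union_left.trans Set.subset_union_left
  have hsubB : B ⊆ Metric.closedBall (0 : EuclideanSpace ℝ (Fin 2)) (1/2) := by
    rw [hcov]; exact Set.subset_union_right.trans Set.subset_union_left
  have hsubC : C ⊆ Metric.closedBall (0 : EuclideanSpace ℝ (Fin 2)) (1/2) := by
    rw [hcov]; exact Set.subset_union_right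
  have hdmA : Metric.diam A ≤ dmax := le_max_left _ _
  have hdmB : Metric.diam B ≤ dmax := le_trans (le_max_left _ _) (le_max_right _ _)
  have hdmC : Metric.diam C ≤ dmax := le_trans (le_max_right _ _) (le_max_right _ _)
  have hABC : ∀ x ∈ Metric.closedBall (0 : EuclideanSpace ℝ (Fin 2)) (1/2),
      x ∈ A ∨ x ∈ B ∨ x ∈ C := by
    intro x hx
    rw [hcov] at hx
    rcases hx with (h | h) | h
    · exact Or.inl h
    · exact Or.inr (Or.inl h)
    · exact Or.inr (Or.inr h)
  have h0m := hABC (bpt 0) (hball 0)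
  have h1m := hABC (bpt (2*π/3)) (hball (2*π/3))
  have h2m := hABC (bpt (4*π/3)) (hball (4*π/3))
  rcases h0m with h0 | h0 | h0 <;> rcases h1m with h1 | h1 | h1 <;>
    rcases h2m with h2 | h2 | h2 <;>
    first
      | exact notsame A hsubA hdmA _ _ d01 h0 h1
      | exact notsame B hsubB hdmB _ _ d01 h0 h1
      | exact notsame C hsubC hdmC _ _ d01 h0 h1
      | exact notsame A hsubA hdmA _ _ d02 h0 h2
      | exact notsame B hsubB hdmB _ _ d02 h0 h2
      | exact notsame C hsubC hdmC _ _ d02 h0 h2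
      | exact notsame A hsubA hdmA _ _ d12 h1 h2
      | exact notsame B hsubB hdmB _ _ d12 h1 h2
      | exact notsame C hsubC hdmC _ _ d12 h1 h2
      | exact main A B C hsubA hsubB hsubC hdmA hdmB hdmC
          (fun x hx => by have := hABC x hx; tauto) h0 h1 h2
      | exact main A C B hsubA hsubC hsubB hdmA hdmC hdmB
          (fun x hx => by have := hABC x hx; tauto) h0 h1 h2
      | exact main B A C hsubB hsubA hsubC hdmB hdmA hdmC
          (fun x hx => by have := hABC x hx; tauto) h0 h1 h2
      | exact main B C A hsubB hsubC hsubA hdmB hdmC hdmA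
          (fun x hx => by have := hABC x hx; tauto) h0 h1 h2
      | exact main C A B hsubC hsubA hsubB hdmC hdmA hdmB
          (fun x hx => by have := hABC x hx; tauto) h0 h1 h2
      | exact main C B A hsubC hsubB hsubA hdmC hdmB hdmA
          (fun x hx => by have := hABC x hx; tauto) h0 h1 h2
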